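/- For a symmetric matrix A ∈ ℝ^{n×n}, independent g, ḡ ∼ N(0, Id_n) and p ≥ 1: ‖Σ_{j,k} A_{jk} g_j ḡ_k‖_{L_p} ≤ ‖Σ_{j,k} A_{jk}(g_j g_k − 1_{j=k})‖_{L_p}. -/

import Mathlib

open MeasureTheory ProbabilityTheory Finset
open scoped ENNReal NNReal

noncomputable section

namespace GaussDecoupAux

lemma sqrt_two_mul_self : Real.sqrt 2 * Real.sqrt 2 = 2 :=
  Real.mul_self_sqrt (by norm_num)

lemma sqrt_two_ne_zero : Real.sqrt 2 ≠ 0 := by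
  have := sqrt_two_mul_self
  intro h; rw [h] at this; norm_num at this

/-- The rotation `(x,y) ↦ ((x+y)/√2, (x−y)/√2)` as a measurable involution of `ℝ × ℝ`. -/
def T2 : ℝ × ℝ ≃ᵐ ℝ × ℝ where
  toFun p := ((p.1 + p.2) / Real.sqrt 2, (p.1 - p.2) / Real.sqrt 2)
  invFun p := ((p.1 + p.2) / Real.sqrt 2, (p.1 - p.2) / Real.sqrt 2)
  left_inv p := by
    have h := sqrt_two_mul_self
    have h0 := sqrt_two_ne_zero
    ext <;> simp only <;> field_simp <;> rw [sq, h] <;> ring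
  right_inv p := by
    have h := sqrt_two_mul_self
    have h0 := sqrt_two_ne_zero
    ext <;> simp only <;> field_simp <;> rw [sq, h] <;> ring
  measurable_toFun :=
    ((measurable_fst.add measurable_snd).div_const _).prodMk
      ((measurable_fst.sub measurable_snd).div_const _)
  measurable_invFun :=
    ((measurable_fst.add measurable_snd).div_const _).prodMk
      ((measurable_fst.sub measurable_snd).div_const _)

lemma T2_apply (p : ℝ × ℝ) :
    T2 p = ((p.1 + p.2) / Real.sqrt 2, (p.1 - p.2) / Real.sqrt 2) := rfl

lemma T2_symm_coe : ⇑(T2.symm) = ⇑T2 := rfl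

/-- The matrix of `T2`. -/
def M2 : Matrix (Fin 2) (Fin 2) ℝ :=
  !![(Real.sqrt 2)⁻¹, (Real.sqrt 2)⁻¹; (Real.sqrt 2)⁻¹, -(Real.sqrt 2)⁻¹]

lemma M2_det : M2.det = -1 := by
  have h := sqrt_two_mul_self
  have h0 := sqrt_two_ne_zero
  rw [M2, Matrix.det_fin_two_of]
  field_simp
  linarith

lemma map_T2_volume :
    Measure.map T2 ((volume : Measure ℝ).prod volume) = (volume : Measure ℝ).prod volume := by
  have hdet : M2.det ≠ 0 := by rw [M2_det]; norm_num
  have hmap : Measure.map (Matrix.toLin' M2) volume = volume := by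
    rw [Real.map_matrix_volume_pi_eq_smul_volume_pi hdet, M2_det]
    norm_num
  have hF : MeasurePreserving (MeasurableEquiv.finTwoArrow (α := ℝ))
      (volume : Measure (Fin 2 → ℝ)) ((volume : Measure ℝ).prod volume) := by
    have := MeasureTheory.measurePreserving_finTwoArrow (volume : Measure ℝ)
    simpa [MeasureTheory.volume_pi] using this
  have hcomp : ⇑T2 = (MeasurableEquiv.finTwoArrow (α := ℝ)) ∘ (Matrix.toLin' M2) ∘
      ⇑(MeasurableEquiv.finTwoArrow (α := ℝ)).symm := by
    funext p
    simp [T2_apply, MeasurableEquiv.finTwoArrow, M2, Matrix.toLin'_apply, Matrix.mulVec,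
      dotProduct, Fin.sum_univ_two, div_eq_mul_inv]
    constructor <;> ring
  have hlin : Measurable (Matrix.toLin' M2) :=
    (LinearMap.continuous_of_finiteDimensional (Matrix.toLin' M2)).measurable
  rw [hcomp, ← Function.comp_assoc]
  rw [← Measure.map_map (by fun_prop) (MeasurableEquiv.finTwoArrow (α := ℝ)).symm.measurable]
  rw [(MeasurePreserving.symm _ hF).map_eq,
    ← Measure.map_map (MeasurableEquiv.finTwoArrow (α := ℝ)).measurable hlin, hmap, hF.map_eq]

lemma prod_withDensity {α β : Type*} [MeasurableSpace α] [MeasurableSpace β]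
    (μ : Measure α) (ν : Measure β) [SigmaFinite μ] [SigmaFinite ν]
    {f : α → ℝ≥0∞} {g : β → ℝ≥0∞} (hf : Measurable f) (hg : Measurable g)
    (h1 : SigmaFinite (μ.withDensity f)) (h2 : SigmaFinite (ν.withDensity g)) :
    (μ.withDensity f).prod (ν.withDensity g)
      = (μ.prod ν).withDensity (fun p => f p.1 * g p.2) := by
  haveI := h1; haveI := h2
  refine (Measure.prod_eq (μ := μ.withDensity f) (ν := ν.withDensity g)
    fun s t hs ht => ?_)
  rw [withDensity_apply _ (hs.prod ht), ← Measure.prod_restrict,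
    lintegral_prod_mul hf.aemeasurable hg.aemeasurable,
    withDensity_apply _ hs, withDensity_apply _ ht]

lemma map_equiv_withDensity {α β : Type*} [MeasurableSpace α] [MeasurableSpace β]
    (e : α ≃ᵐ β) (μ : Measure α) {f : α → ℝ≥0∞} (hf : Measurable f) :
    Measure.map e (μ.withDensity f) = (Measure.map e μ).withDensity (fun y => f (e.symm y)) := by
  ext s hs
  rw [Measure.map_apply e.measurable hs, withDensity_apply _ (e.measurable hs),
    withDensity_apply _ hs]
  have h := setLIntegral_map (μ := μ) hs (hf.comp e.symm.measurable) e.measurable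
  simpa [Function.comp_def] using h.symm

lemma gaussianPDFReal_rot (x y : ℝ) :
    gaussianPDFReal 0 1 ((x + y) / Real.sqrt 2) * gaussianPDFReal 0 1 ((x - y) / Real.sqrt 2)
      = gaussianPDFReal 0 1 x * gaussianPDFReal 0 1 y := by
  have key : ((x + y) / Real.sqrt 2) ^ 2 + ((x - y) / Real.sqrt 2) ^ 2 = x ^ 2 + y ^ 2 := by
    rw [div_pow, div_pow, Real.sq_sqrt (by norm_num : (0:ℝ) ≤ 2)]
    ring
  simp only [gaussianPDFReal, sub_zero, NNReal.coe_one, mul_one]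
  rw [mul_mul_mul_comm, ← Real.exp_add, mul_mul_mul_comm, ← Real.exp_add]
  congr 1
  rw [Real.exp_eq_exp]
  linarith [key]

lemma map_T2_gauss :
    Measure.map T2 ((gaussianReal 0 1).prod (gaussianReal 0 1))
      = (gaussianReal 0 1).prod (gaussianReal 0 1) := by
  have hγ : gaussianReal 0 1 = volume.withDensity (gaussianPDF 0 1) :=
    gaussianReal_of_var_ne_zero 0 one_ne_zero
  have hpdfm : Measurable (gaussianPDF 0 1) := measurable_gaussianPDF 0 1
  have hsf : SigmaFinite (volume.withDensity (gaussianPDF 0 1)) := by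
    rw [← hγ]; infer_instance
  have hprod : (gaussianReal 0 1).prod (gaussianReal 0 1)
      = ((volume : Measure ℝ).prod volume).withDensity
        (fun p => gaussianPDF 0 1 p.1 * gaussianPDF 0 1 p.2) := by
    rw [hγ]
    exact prod_withDensity volume volume hpdfm hpdfm hsf hsf
  have hm : Measurable (fun p : ℝ × ℝ => gaussianPDF 0 1 p.1 * gaussianPDF 0 1 p.2) :=
    (hpdfm.comp measurable_fst).mul (hpdfm.comp measurable_snd)
  rw [hprod, map_equiv_withDensity T2 _ hm, map_T2_volume]
  congr 1
  funext p
  show gaussianPDF 0 1 (T2.symm p).1 * gaussianPDF 0 1 (T2.symm p).2 = _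
  rw [T2_symm_coe]
  simp only [T2_apply, gaussianPDF_def]
  rw [← ENNReal.ofReal_mul (gaussianPDFReal_nonneg _ _ _),
    ← ENNReal.ofReal_mul (gaussianPDFReal_nonneg _ _ _), gaussianPDFReal_rot]

section Dim

variable {n : ℕ}

/-- The quadratic form with the diagonal subtracted. -/
def Qf (A : Matrix (Fin n) (Fin n) ℝ) : (Fin n → ℝ) → ℝ :=
  fun x => ∑ j, ∑ k, A j k * (x j * x k - if j = k then 1 else 0)

def uf : (Fin n → ℝ) × (Fin n → ℝ) → Fin n → ℝ :=
  fun z i => (z.1 i + z.2 i) / Real.sqrt 2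

def vf : (Fin n → ℝ) × (Fin n → ℝ) → Fin n → ℝ :=
  fun z i => (z.1 i - z.2 i) / Real.sqrt 2

def Uf : (Fin n → ℝ) × (Fin n → ℝ) → (Fin n → ℝ) × (Fin n → ℝ) :=
  fun z => (uf z, vf z)

lemma uf_measurable : Measurable (uf (n := n)) :=
  measurable_pi_lambda _ fun i =>
    (((measurable_pi_apply i).comp measurable_fst).add
      ((measurable_pi_apply i).comp measurable_snd)).div_const _

lemma vf_measurable : Measurable (vf (n := n)) :=
  measurable_pi_lambda _ fun i =>
    (((measurable_pi_apply i).comp measurable_fst).sub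
      ((measurable_pi_apply i).comp measurable_snd)).div_const _

lemma Qf_measurable (A : Matrix (Fin n) (Fin n) ℝ) : Measurable (Qf A) :=
  Finset.measurable_sum _ fun j _ => Finset.measurable_sum _ fun k _ =>
    (((measurable_pi_apply j).mul (measurable_pi_apply k)).sub measurable_const).const_mul _

lemma key_identity (A : Matrix (Fin n) (Fin n) ℝ) (hA : A.IsSymm)
    (z : (Fin n → ℝ) × (Fin n → ℝ)) :
    ∑ j, ∑ k, A j k * z.1 j * z.2 k = (Qf A (uf z) - Qf A (vf z)) / 2 := by
  have h2 := sqrt_two_mul_self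
  have swap : ∑ j, ∑ k, A j k * z.2 j * z.1 k = ∑ j, ∑ k, A j k * z.1 j * z.2 k := by
    rw [Finset.sum_comm]
    refine Finset.sum_congr rfl fun j _ => Finset.sum_congr rfl fun k _ => ?_
    rw [hA.apply j k]
    ring
  have expand : Qf A (uf z) - Qf A (vf z)
      = (∑ j, ∑ k, A j k * z.1 j * z.2 k) + ∑ j, ∑ k, A j k * z.2 j * z.1 k := by
    simp only [Qf, uf, vf]
    rw [← Finset.sum_sub_distrib, ← Finset.sum_add_distrib]
    refine Finset.sum_congr rfl fun j _ => ?_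
    rw [← Finset.sum_sub_distrib, ← Finset.sum_add_distrib]
    refine Finset.sum_congr rfl fun k _ => ?_
    rw [div_mul_div_comm, div_mul_div_comm, h2]
    ring
  rw [expand, swap]
  ring

lemma Uf_mp (n : ℕ) : MeasurePreserving (Uf (n := n))
    ((Measure.pi fun _ : Fin n => gaussianReal 0 1).prod
      (Measure.pi fun _ : Fin n => gaussianReal 0 1))
    ((Measure.pi fun _ : Fin n => gaussianReal 0 1).prod
      (Measure.pi fun _ : Fin n => gaussianReal 0 1)) := by
  have hT2mp : MeasurePreserving (⇑T2) ((gaussianReal 0 1).prod (gaussianReal 0 1))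
      ((gaussianReal 0 1).prod (gaussianReal 0 1)) := ⟨T2.measurable, map_T2_gauss⟩
  have hpi : MeasurePreserving (fun (a : Fin n → ℝ × ℝ) (i : Fin n) => T2 (a i))
      (Measure.pi fun _ : Fin n => (gaussianReal 0 1).prod (gaussianReal 0 1))
      (Measure.pi fun _ : Fin n => (gaussianReal 0 1).prod (gaussianReal 0 1)) :=
    measurePreserving_pi _ _ (fun _ => hT2mp)
  have hE := measurePreserving_arrowProdEquivProdArrow ℝ ℝ (Fin n)
      (fun _ : Fin n => gaussianReal 0 1) (fun _ : Fin n => gaussianReal 0 1)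
  have hcomp := (hE.comp hpi).comp (MeasurePreserving.symm _ hE)
  have hfun : (Uf (n := n))
      = ⇑(MeasurableEquiv.arrowProdEquivProdArrow ℝ ℝ (Fin n))
        ∘ (fun (a : Fin n → ℝ × ℝ) (i : Fin n) => T2 (a i))
        ∘ ⇑(MeasurableEquiv.arrowProdEquivProdArrow ℝ ℝ (Fin n)).symm := by
    funext z
    rfl
  rw [hfun]
  exact hcomp

end Dim

end GaussDecoupAux

end

open GaussDecoupAux

/-- Reverse Gaussian decoupling for quadratic forms with a symmetric matrix. -/
theorem gauss_reverse_decoupling_order_two (n : ℕ) (A : Matrix (Fin n) (Fin n) ℝ)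
    (hA : A.IsSymm) (p : ℝ) (hp : 1 ≤ p) :
    (∫⁻ z, ENNReal.ofReal (|∑ j, ∑ k, A j k * z.1 j * z.2 k| ^ p)
        ∂((Measure.pi fun _ : Fin n => gaussianReal 0 1).prod
          (Measure.pi fun _ : Fin n => gaussianReal 0 1))) ^ (1 / p) ≤
      (∫⁻ x, ENNReal.ofReal
          (|∑ j, ∑ k, A j k * (x j * x k - if j = k then 1 else 0)| ^ p)
          ∂(Measure.pi fun _ : Fin n => gaussianReal 0 1)) ^ (1 / p) := by
  classical
  have hp0 : (0:ℝ) ≤ p := zero_le_one.trans hp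
  have hppos : (0:ℝ) < p := zero_lt_one.trans_le hp
  set μ := Measure.pi fun _ : Fin n => gaussianReal 0 1 with hμdef
  have hUmp : MeasurePreserving (Uf (n := n)) (μ.prod μ) (μ.prod μ) := Uf_mp n
  have hQm : Measurable (Qf A) := Qf_measurable A
  have hu_law : Measure.map (uf (n := n)) (μ.prod μ) = μ := by
    have h1 : (uf (n := n)) = Prod.fst ∘ (Uf (n := n)) := rfl
    rw [h1, ← Measure.map_map measurable_fst hUmp.measurable, hUmp.map_eq,
      Measure.map_fst_prod]
    simp [hμdef]
  have hv_law : Measure.map (vf (n := n)) (μ.prod μ) = μ := by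
    have h1 : (vf (n := n)) = Prod.snd ∘ (Uf (n := n)) := rfl
    rw [h1, ← Measure.map_map measurable_snd hUmp.measurable, hUmp.map_eq,
      Measure.map_snd_prod]
    simp [hμdef]
  have hRmeas : Measurable fun x => (ENNReal.ofReal |Qf A x|) ^ p :=
    ENNReal.continuous_rpow_const.measurable.comp (hQm.abs.ennreal_ofReal)
  set R : ℝ≥0∞ := (∫⁻ x, (ENNReal.ofReal |Qf A x|) ^ p ∂μ) ^ (1/p) with hR
  have hterm : ∀ (w : (Fin n → ℝ) × (Fin n → ℝ) → Fin n → ℝ), Measurable w →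
      Measure.map w (μ.prod μ) = μ →
      (∫⁻ z, (ENNReal.ofReal (|Qf A (w z)| / 2)) ^ p ∂(μ.prod μ)) ^ (1/p)
        = ENNReal.ofReal 2⁻¹ * R := by
    intro w hw hwlaw
    have h1 : ∀ z, ENNReal.ofReal (|Qf A (w z)| / 2)
        = ENNReal.ofReal 2⁻¹ * ENNReal.ofReal |Qf A (w z)| := by
      intro z
      rw [← ENNReal.ofReal_mul (by norm_num)]
      congr 1
      ring
    simp_rw [h1, ENNReal.mul_rpow_of_nonneg _ _ hp0]
    rw [lintegral_const_mul' _ _ (ENNReal.rpow_ne_top_of_nonneg hp0 ENNReal.ofReal_ne_top),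
      ENNReal.mul_rpow_of_nonneg _ _ (by positivity : (0:ℝ) ≤ 1/p),
      ← ENNReal.rpow_mul, mul_one_div, div_self hppos.ne', ENNReal.rpow_one]
    congr 1
    rw [show (∫⁻ z, (ENNReal.ofReal |Qf A (w z)|) ^ p ∂(μ.prod μ))
        = ∫⁻ x, (ENNReal.ofReal |Qf A x|) ^ p ∂(Measure.map w (μ.prod μ)) from
        (lintegral_map hRmeas hw).symm, hwlaw]
  set f1 : (Fin n → ℝ) × (Fin n → ℝ) → ℝ≥0∞ :=
    fun z => ENNReal.ofReal (|Qf A (uf z)| / 2) with hf1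
  set g1 : (Fin n → ℝ) × (Fin n → ℝ) → ℝ≥0∞ :=
    fun z => ENNReal.ofReal (|Qf A (vf z)| / 2) with hg1
  have hf1m : Measurable f1 := (((hQm.comp uf_measurable).abs).div_const _).ennreal_ofReal
  have hg1m : Measurable g1 := (((hQm.comp vf_measurable).abs).div_const _).ennreal_ofReal
  have hptwise : ∀ z : (Fin n → ℝ) × (Fin n → ℝ),
      ENNReal.ofReal |∑ j, ∑ k, A j k * z.1 j * z.2 k| ≤ f1 z + g1 z := by
    intro z
    rw [hf1, hg1]
    rw [← ENNReal.ofReal_add (by positivity) (by positivity)]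
    apply ENNReal.ofReal_le_ofReal
    rw [key_identity A hA z, abs_div]
    have habs : |Qf A (uf z) - Qf A (vf z)| ≤ |Qf A (uf z)| + |Qf A (vf z)| := abs_sub _ _
    have h2 : |(2:ℝ)| = 2 := by norm_num
    rw [h2]
    linarith
  calc (∫⁻ z, ENNReal.ofReal (|∑ j, ∑ k, A j k * z.1 j * z.2 k| ^ p)
          ∂(μ.prod μ)) ^ (1/p)
      = (∫⁻ z, (ENNReal.ofReal |∑ j, ∑ k, A j k * z.1 j * z.2 k|) ^ p
          ∂(μ.prod μ)) ^ (1/p) := by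
        congr 1
        exact lintegral_congr fun z =>
          (ENNReal.ofReal_rpow_of_nonneg (abs_nonneg _) hp0).symm
    _ ≤ (∫⁻ z, (f1 + g1) z ^ p ∂(μ.prod μ)) ^ (1/p) := by
        apply ENNReal.rpow_le_rpow _ (by positivity)
        refine lintegral_mono fun z => ENNReal.rpow_le_rpow ?_ hp0
        simpa using hptwise z
    _ ≤ (∫⁻ z, f1 z ^ p ∂(μ.prod μ)) ^ (1/p) + (∫⁻ z, g1 z ^ p ∂(μ.prod μ)) ^ (1/p) :=
        ENNReal.lintegral_Lp_add_le hf1m.aemeasurable hg1m.aemeasurable hp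
    _ = ENNReal.ofReal 2⁻¹ * R + ENNReal.ofReal 2⁻¹ * R := by
        rw [hterm _ uf_measurable hu_law, hterm _ vf_measurable hv_law]
    _ = R := by
        rw [← add_mul, ← ENNReal.ofReal_add (by norm_num) (by norm_num)]
        norm_num
    _ = _ := by
        rw [hR]
        congr 1
        exact lintegral_congr fun x =>
          ENNReal.ofReal_rpow_of_nonneg (abs_nonneg _) hp0
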